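/- Let n be a positive integer and let X_j be a sequence of nonempty compact connected subsets of ℝⁿ converging in the Hausdorff sense to a compact set X ⊆ ℝⁿ whose Hausdorff dimension is strictly greater than 1. Then H¹(X_j) → ∞ as j → ∞. -/

import Mathlib

open MeasureTheory ENNReal

lemma aux_ball {E : Type*} [MetricSpace E] [MeasurableSpace E] [BorelSpace E] {K : Set E}
    (hK : IsPreconnected K) {x y : E} (hx : x ∈ K) (hy : y ∈ K) {r : ℝ}
    (hr : r ≤ dist y x) :
    ENNReal.ofReal r ≤ μH[1] (K ∩ Metric.ball x r) := by
  set f : E → ℝ := fun z => dist z x with hf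
  have hlip : LipschitzWith 1 f := LipschitzWith.dist_left x
  have hIcc : Set.Icc 0 (dist y x) ⊆ f '' K := by
    have := (hK.image f (hlip.continuous.continuousOn)).Icc_subset
      ⟨x, hx, dist_self x⟩ ⟨y, hy, rfl⟩
    exact this
  have himg : Set.Ico 0 r ⊆ f '' (K ∩ Metric.ball x r) := by
    rintro t ⟨ht0, htr⟩
    obtain ⟨z, hz, hzt⟩ := hIcc ⟨ht0, htr.le.trans hr⟩
    exact ⟨z, ⟨hz, show dist z x < r from lt_of_eq_of_lt hzt htr⟩, hzt⟩
  calc ENNReal.ofReal r = μH[1] (Set.Ico (0:ℝ) r) := by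
        rw [hausdorffMeasure_real, Real.volume_Ico, sub_zero]
    _ ≤ μH[1] (f '' (K ∩ Metric.ball x r)) := measure_mono himg
    _ ≤ (1:ℝ≥0∞) ^ (1:ℝ) * μH[1] (K ∩ Metric.ball x r) := by
        simpa using hlip.hausdorffMeasure_image_le (by norm_num : (0:ℝ) ≤ 1) _
    _ = μH[1] (K ∩ Metric.ball x r) := by simp

lemma aux_count {E : Type*} [MetricSpace E] [MeasurableSpace E] [BorelSpace E] {K : Set E}
    (hKc : IsCompact K) (hK : IsPreconnected K) {r : ℝ} (hr : 0 < r) :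
    ∃ P : Finset E, ↑P ⊆ K ∧ (∀ y ∈ K, ∃ x ∈ P, dist y x < 2 * r) ∧
      (P.card : ℝ≥0∞) * ENNReal.ofReal r ≤ μH[1] K + ENNReal.ofReal r := by
  classical
  obtain ⟨t, htK, htf, htcov⟩ := hKc.finite_cover_balls hr
  set Sep : Finset E → Prop :=
    fun P => ↑P ⊆ K ∧ ∀ x ∈ P, ∀ y ∈ P, x ≠ y → 2 * r ≤ dist x y with hSep
  have hbound : ∀ P : Finset E, Sep P → P.card ≤ htf.toFinset.card := by
    intro P hP
    have hex : ∀ x ∈ P, ∃ c ∈ htf.toFinset, dist x c < r := by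
      intro x hx
      have := htcov (hP.1 hx)
      simp only [Set.mem_iUnion, Metric.mem_ball] at this
      obtain ⟨c, hc, hd⟩ := this
      exact ⟨c, htf.mem_toFinset.2 hc, hd⟩
    set g : E → E := fun x =>
      if h : ∃ c ∈ htf.toFinset, dist x c < r then h.choose else x with hg
    have hgP : ∀ x ∈ P, g x ∈ htf.toFinset ∧ dist x (g x) < r := by
      intro x hx
      have h := hex x hx
      simp only [hg, dif_pos h]
      exact ⟨h.choose_spec.1, h.choose_spec.2⟩
    refine Finset.card_le_card_of_injOn g (fun x hx => (hgP x hx).1) ?_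
    intro a ha b hb hab
    by_contra hne
    have h2r := hP.2 a ha b hb hne
    have da := (hgP a ha).2
    have db := (hgP b hb).2
    rw [hab] at da
    have : dist a b < 2 * r := by
      calc dist a b ≤ dist a (g b) + dist (g b) b := dist_triangle _ _ _
        _ < r + r := by rw [dist_comm (g b) b]; exact add_lt_add da db
        _ = 2 * r := by ring
    linarith
  set S : Set ℕ := {k | ∃ P : Finset E, Sep P ∧ P.card = k} with hS
  have hS0 : 0 ∈ S := ⟨∅, ⟨by simp, by simp⟩, rfl⟩
  have hbdd : BddAbove S := ⟨htf.toFinset.card, by rintro k ⟨P, hP, rfl⟩; exact hbound P hP⟩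
  obtain ⟨P, hPsep, hPcard⟩ := Nat.sSup_mem ⟨0, hS0⟩ hbdd
  refine ⟨P, hPsep.1, ?_, ?_⟩
  · intro y hy
    by_contra hcon
    push_neg at hcon
    have hsep' : ∀ x ∈ P, 2 * r ≤ dist y x := hcon
    have hyP : y ∉ P := by
      intro hyP
      have := hsep' y hyP
      simp only [dist_self] at this
      linarith
    have hSmem : P.card + 1 ∈ S := by
      refine ⟨insert y P, ⟨?_, ?_⟩, by rw [Finset.card_insert_of_notMem hyP]⟩
      · rw [Finset.coe_insert]
        exact Set.insert_subset hy hPsep.1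
      · intro a ha b hb hab
        rcases Finset.mem_insert.1 ha with rfl | ha' <;>
          rcases Finset.mem_insert.1 hb with rfl | hb'
        · exact absurd rfl hab
        · exact hsep' b hb'
        · rw [dist_comm]; exact hsep' a ha'
        · exact hPsep.2 a ha' b hb' hab
    have := le_csSup hbdd hSmem
    rw [hPcard] at this
    omega
  · rcases Nat.lt_or_ge P.card 2 with h2 | h2
    · have : (P.card : ℝ≥0∞) ≤ 1 := by exact_mod_cast Nat.lt_succ_iff.1 h2
      calc (P.card : ℝ≥0∞) * ENNReal.ofReal r ≤ 1 * ENNReal.ofReal r :=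
            mul_le_mul_left this _
        _ = ENNReal.ofReal r := one_mul _
        _ ≤ μH[1] K + ENNReal.ofReal r := le_add_self
    · have hball : ∀ x ∈ P, ENNReal.ofReal r ≤ μH[1] (K ∩ Metric.ball x r) := by
        intro x hx
        obtain ⟨y, hy, hne⟩ := Finset.exists_mem_ne h2 x
        have hd := hPsep.2 y hy x hx hne
        exact aux_ball hK (hPsep.1 hx) (hPsep.1 hy) (by linarith)
      have hdisj : (↑P : Set E).PairwiseDisjoint (fun x => K ∩ Metric.ball x r) := by
        intro a ha b hb hab
        have := hPsep.2 a ha b hb hab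
        exact Set.disjoint_of_subset Set.inter_subset_right Set.inter_subset_right
          (Metric.ball_disjoint_ball (by linarith))
      calc (P.card : ℝ≥0∞) * ENNReal.ofReal r
          = ∑ _x ∈ P, ENNReal.ofReal r := by rw [Finset.sum_const, nsmul_eq_mul]
        _ ≤ ∑ x ∈ P, μH[1] (K ∩ Metric.ball x r) := Finset.sum_le_sum fun x hx => hball x hx
        _ = μH[1] (⋃ x ∈ P, K ∩ Metric.ball x r) :=
            (measure_biUnion_finset hdisj fun x _ =>
              hKc.isClosed.measurableSet.inter measurableSet_ball).symm
        _ ≤ μH[1] K := measure_mono (Set.iUnion₂_subset fun x _ => Set.inter_subset_left)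
        _ ≤ μH[1] K + ENNReal.ofReal r := le_self_add

/-- If nonempty compact connected subsets of `ℝⁿ` converge in the Hausdorff sense to a
compact set of Hausdorff dimension strictly greater than `1`, then their lengths
(one-dimensional Hausdorff measures) diverge to infinity. -/
theorem length_tendsto_top_of_dimH_limit_gt_one
    (n : ℕ) (hn : 0 < n)
    (X : ℕ → Set (EuclideanSpace ℝ (Fin n))) (L : Set (EuclideanSpace ℝ (Fin n)))
    (hne : ∀ j, (X j).Nonempty) (hcpt : ∀ j, IsCompact (X j))
    (hconn : ∀ j, IsConnected (X j))
    (hLcpt : IsCompact L) (hdim : 1 < dimH L)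
    (hlim : Filter.Tendsto (fun j => Metric.hausdorffDist (X j) L)
      Filter.atTop (nhds 0)) :
    Filter.Tendsto (fun j => μH[1] (X j)) Filter.atTop (nhds ⊤) := by
  classical
  by_contra hcon
  have hLne : L.Nonempty := by
    rw [Set.nonempty_iff_ne_empty]
    rintro rfl
    simp [dimH_empty] at hdim
  obtain ⟨d, hd1, hdlt⟩ := ENNReal.lt_iff_exists_nnreal_btwn.1 hdim
  have hd1' : (1:ℝ) < (d:ℝ) := by exact_mod_cast hd1
  rw [ENNReal.tendsto_nhds_top_iff_nnreal] at hcon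
  push_neg at hcon
  obtain ⟨C, hC⟩ := hcon
  have hC' : ∃ᶠ j in Filter.atTop, μH[1] (X j) ≤ C := hC
  set r : ℕ → ℝ := fun k => ((k:ℝ)+1)⁻¹ with hrdef
  have hrpos : ∀ k, 0 < r k := fun k => by positivity
  have hrle1 : ∀ k, r k ≤ 1 := by
    intro k
    rw [hrdef]
    simp only []
    rw [inv_le_one_iff₀]
    right; linarith [Nat.cast_nonneg (α := ℝ) k]
  have hev : ∀ k, ∀ᶠ jj in Filter.atTop, Metric.hausdorffDist (X jj) L < r k := fun k =>
    hlim.eventually (gt_mem_nhds (hrpos k))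
  have hex : ∀ k, ∃ jj, μH[1] (X jj) ≤ C ∧ Metric.hausdorffDist (X jj) L < r k := fun k =>
    (hC'.and_eventually (hev k)).exists
  choose j hjC hjd using hex
  have hP := fun k => aux_count (hcpt (j k)) (hconn (j k)).isPreconnected (hrpos k)
  choose P hPsub hPcov hPcard using hP
  have hEdist : ∀ k, EMetric.hausdorffEdist (X (j k)) L ≠ ⊤ := fun k =>
    Metric.hausdorffEdist_ne_top_of_nonempty_of_bounded (hne _) hLne
      (hcpt _).isBounded hLcpt.isBounded
  have hcov : ∀ k, L ⊆ ⋃ i : (P k : Finset (EuclideanSpace ℝ (Fin n))),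
      Metric.ball (i : EuclideanSpace ℝ (Fin n)) (3 * r k) := by
    intro k y hy
    obtain ⟨x, hxX, hxd⟩ := Metric.exists_dist_lt_of_hausdorffDist_lt' hy (hjd k) (hEdist k)
    obtain ⟨p, hp, hpd⟩ := hPcov k x hxX
    refine Set.mem_iUnion.2 ⟨⟨p, hp⟩, ?_⟩
    simp only [Metric.mem_ball]
    calc dist y p ≤ dist y x + dist x p := dist_triangle _ _ _
      _ < r k + 2 * r k := add_lt_add (by rwa [dist_comm]) hpd
      _ = 3 * r k := by ring
  set B : ℝ≥0∞ := (ENNReal.ofReal 6) ^ (d:ℝ) * (C + 1) with hB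
  have hd0 : (0:ℝ) ≤ (d:ℝ) := by linarith
  have hmain : μH[(d:ℝ)] L ≤ B := by
    have hr0 : Filter.Tendsto (fun k => ENNReal.ofReal (6 * r k)) Filter.atTop (nhds 0) := by
      have h1 : Filter.Tendsto (fun k : ℕ => 6 * r k) Filter.atTop (nhds 0) := by
        have := (tendsto_one_div_add_atTop_nhds_zero_nat (𝕜 := ℝ)).const_mul 6
        simpa [hrdef, one_div] using this
      have := ENNReal.tendsto_ofReal h1
      simpa using this
    have hdiam : ∀ k, ∀ i : (P k : Finset (EuclideanSpace ℝ (Fin n))),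
        EMetric.diam (Metric.ball (i : EuclideanSpace ℝ (Fin n)) (3 * r k))
          ≤ ENNReal.ofReal (6 * r k) := by
      intro k i
      refine EMetric.diam_le fun x hx y hy => ?_
      rw [edist_dist]
      apply ENNReal.ofReal_le_ofReal
      have hx' := Metric.mem_ball.1 hx
      have hy' := Metric.mem_ball.1 hy
      have := dist_triangle x (i : EuclideanSpace ℝ (Fin n)) y
      rw [dist_comm (i : EuclideanSpace ℝ (Fin n)) y] at this
      linarith
    have hle := MeasureTheory.Measure.hausdorffMeasure_le_liminf_sum (d:ℝ) L
      (fun k => ENNReal.ofReal (6 * r k)) hr0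
      (fun k (i : (P k : Finset (EuclideanSpace ℝ (Fin n)))) =>
        Metric.ball (i : EuclideanSpace ℝ (Fin n)) (3 * r k))
      (Filter.Eventually.of_forall hdiam) (Filter.Eventually.of_forall hcov)
    refine hle.trans ?_
    have hsum : ∀ k, (∑ i : (P k : Finset (EuclideanSpace ℝ (Fin n))),
        EMetric.diam (Metric.ball (i : EuclideanSpace ℝ (Fin n)) (3 * r k)) ^ (d:ℝ)) ≤ B := by
      intro k
      have step1 : (∑ i : (P k : Finset (EuclideanSpace ℝ (Fin n))),
          EMetric.diam (Metric.ball (i : EuclideanSpace ℝ (Fin n)) (3 * r k)) ^ (d:ℝ))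
          ≤ ((P k).card : ℝ≥0∞) * ENNReal.ofReal (6 * r k) ^ (d:ℝ) := by
        calc (∑ i : (P k : Finset (EuclideanSpace ℝ (Fin n))),
            EMetric.diam (Metric.ball (i : EuclideanSpace ℝ (Fin n)) (3 * r k)) ^ (d:ℝ))
            ≤ ∑ _i : (P k : Finset (EuclideanSpace ℝ (Fin n))),
              ENNReal.ofReal (6 * r k) ^ (d:ℝ) :=
              Finset.sum_le_sum fun i _ => ENNReal.rpow_le_rpow (hdiam k i) hd0
          _ = ((P k).card : ℝ≥0∞) * ENNReal.ofReal (6 * r k) ^ (d:ℝ) := by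
              rw [Finset.sum_const, Finset.card_univ, Fintype.card_coe, nsmul_eq_mul]
      have step2 : ENNReal.ofReal (6 * r k) ^ (d:ℝ)
          ≤ ENNReal.ofReal 6 ^ (d:ℝ) * ENNReal.ofReal (r k) := by
        rw [ENNReal.ofReal_mul (by norm_num : (0:ℝ) ≤ 6),
          ENNReal.mul_rpow_of_nonneg _ _ hd0]
        refine mul_le_mul_right ?_ _
        have h1 : ENNReal.ofReal (r k) ≤ 1 := ENNReal.ofReal_le_one.2 (hrle1 k)
        calc ENNReal.ofReal (r k) ^ (d:ℝ) ≤ ENNReal.ofReal (r k) ^ (1:ℝ) :=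
              ENNReal.rpow_le_rpow_of_exponent_ge h1 (le_of_lt hd1')
          _ = ENNReal.ofReal (r k) := ENNReal.rpow_one _
      calc (∑ i : (P k : Finset (EuclideanSpace ℝ (Fin n))),
          EMetric.diam (Metric.ball (i : EuclideanSpace ℝ (Fin n)) (3 * r k)) ^ (d:ℝ))
          ≤ ((P k).card : ℝ≥0∞) * ENNReal.ofReal (6 * r k) ^ (d:ℝ) := step1
        _ ≤ ((P k).card : ℝ≥0∞) * (ENNReal.ofReal 6 ^ (d:ℝ) * ENNReal.ofReal (r k)) :=
            mul_le_mul_right step2 _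
        _ = ENNReal.ofReal 6 ^ (d:ℝ) * (((P k).card : ℝ≥0∞) * ENNReal.ofReal (r k)) := by
            ring
        _ ≤ ENNReal.ofReal 6 ^ (d:ℝ) * (μH[1] (X (j k)) + ENNReal.ofReal (r k)) :=
            mul_le_mul_right (hPcard k) _
        _ ≤ B := by
            rw [hB]
            refine mul_le_mul_right (add_le_add ?_ ?_) _
            · exact hjC k
            · exact ENNReal.ofReal_le_one.2 (hrle1 k)
    refine le_trans (Filter.liminf_le_liminf (Filter.Eventually.of_forall hsum)) ?_
    exact le_of_eq (Filter.liminf_const _)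
  have hBne : B ≠ ⊤ := by
    rw [hB]
    exact ENNReal.mul_ne_top
      (ENNReal.rpow_ne_top_of_nonneg hd0 ENNReal.ofReal_ne_top)
      (by simp)
  have hdim_le : dimH L ≤ d :=
    dimH_le_of_hausdorffMeasure_ne_top (by exact (hmain.trans_lt (lt_top_iff_ne_top.2 hBne)).ne)
  exact lt_irrefl _ (hdlt.trans_le hdim_le)
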